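/- For the position-dependent-mass system with H₂ = p₂²q₂⁴/2 + 2/q₂², the function θ₂ = (1/2)·arctan(p₂q₂³/2) satisfies {θ₂, H₂} = 1 on the set q₂ ≠ 0. -/

import Mathlib

/-- One-dimensional Poisson bracket in coordinates (q₂, p₂). -/
noncomputable def poissonBracket1 (F G : ℝ → ℝ → ℝ) (q p : ℝ) : ℝ :=
  deriv (fun x => F x p) q * deriv (fun x => G q x) p
  - deriv (fun x => F q x) p * deriv (fun x => G x p) q

/-- For the position-dependent-mass Hamiltonian H₂ = p₂²q₂⁴/2 + 2/q₂²,
the angle θ₂ = (1/2)·arctan(p₂q₂³/2) satisfies {θ₂, H₂} = 1 where q₂ ≠ 0. -/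
theorem pdm_angle_variable_2
    (H2 θ2 : ℝ → ℝ → ℝ)
    (hH2 : H2 = fun q2 p2 => p2 ^ 2 * q2 ^ 4 / 2 + 2 / q2 ^ 2)
    (hθ2 : θ2 = fun q2 p2 => (1 / 2) * Real.arctan (p2 * q2 ^ 3 / 2)) :
    ∀ q2 p2 : ℝ, q2 ≠ 0 → poissonBracket1 θ2 H2 q2 p2 = 1 := by
  intro q p hq
  subst hH2 hθ2
  have hu : (0:ℝ) < 1 + (p * q ^ 3 / 2) ^ 2 := by positivity
  -- derivative of θ in q
  have hθq : HasDerivAt (fun x : ℝ => (1/2) * Real.arctan (p * x ^ 3 / 2)) 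
      ((1/2) * (1 / (1 + (p * q ^ 3 / 2) ^ 2) * (p * (3 * q ^ 2) / 2))) q := by
    have h1 : HasDerivAt (fun x : ℝ => p * x ^ 3 / 2) (p * (3 * q ^ 2) / 2) q := by
      have := ((hasDerivAt_pow 3 q).const_mul p).div_const 2
      simpa using this
    exact ((Real.hasDerivAt_arctan _).comp q h1).const_mul (1/2)
  have hθp : HasDerivAt (fun x : ℝ => (1/2) * Real.arctan (x * q ^ 3 / 2)) 
      ((1/2) * (1 / (1 + (p * q ^ 3 / 2) ^ 2) * (q ^ 3 / 2))) p := by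
    have h1 : HasDerivAt (fun x : ℝ => x * q ^ 3 / 2) (q ^ 3 / 2) p := by
      simpa using ((hasDerivAt_id p).mul_const (q ^ 3)).div_const 2
    exact ((Real.hasDerivAt_arctan _).comp p h1).const_mul (1/2)
  have hHp : HasDerivAt (fun x : ℝ => x ^ 2 * q ^ 4 / 2 + 2 / q ^ 2) (p * q ^ 4) p := by
    have h1 : HasDerivAt (fun x : ℝ => x ^ 2 * q ^ 4 / 2) (p * q ^ 4) p := by
      have := ((hasDerivAt_pow 2 p).mul_const (q ^ 4)).div_const 2
      refine this.congr_deriv ?_; norm_num; ring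
    simpa using h1.add_const (2 / q ^ 2)
  have hHq : HasDerivAt (fun x : ℝ => p ^ 2 * x ^ 4 / 2 + 2 / x ^ 2) 
      (p ^ 2 * (4 * q ^ 3) / 2 + (-(2 * (2 * q)) / (q ^ 2) ^ 2)) q := by
    have h1 : HasDerivAt (fun x : ℝ => p ^ 2 * x ^ 4 / 2) (p ^ 2 * (4 * q ^ 3) / 2) q := by
      have := ((hasDerivAt_pow 4 q).const_mul (p ^ 2)).div_const 2
      simpa using this
    have h2 : HasDerivAt (fun x : ℝ => 2 / x ^ 2) (-(2 * (2 * q)) / (q ^ 2) ^ 2) q := by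
      have hx : HasDerivAt (fun x : ℝ => x ^ 2) (2 * q) q := by simpa using hasDerivAt_pow 2 q
      simpa [Pi.div_def] using (hasDerivAt_const q (2:ℝ)).div hx (pow_ne_zero 2 hq)
    exact h1.add h2
  unfold poissonBracket1
  rw [hθq.deriv, hθp.deriv, hHp.deriv, hHq.deriv]
  field_simp
  ring
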